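/- For every shape transformation φ of ℝ^n and every smooth metric g of degenerate Kundt shape, the pullback φ*g is again a smooth metric of degenerate Kundt shape; that is, shape transformations preserve the class of degenerate Kundt-shaped metrics (Theorem 2). -/

import Mathlib

open Matrix

noncomputable section

/-- We work on `ℝ^(n+3)` (so the dimension is an arbitrary integer `≥ 3`), with coordinates
`(u, x^1, …, x^{n+1}, v)`. Index of the coordinate `u`. -/
def uIdx (n : ℕ) : Fin (n + 3) := 0

/-- Index of the coordinate `v`. -/
def vIdx (n : ℕ) : Fin (n + 3) := Fin.last (n + 2)

/-- Index of the coordinate `x^i`. -/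
def xIdx (n : ℕ) (i : Fin (n + 1)) : Fin (n + 3) := ⟨i.val + 1, by omega⟩

/-- Partial derivative of a scalar function `f` on `ℝ^(n+3)` in the `j`-th coordinate at `p`. -/
def partialDeriv' (n : ℕ) (f : (Fin (n + 3) → ℝ) → ℝ) (j : Fin (n + 3))
    (p : Fin (n + 3) → ℝ) : ℝ :=
  deriv (fun t => f (Function.update p j t)) (p j)

namespace KundtAux
variable {n : ℕ}

lemma uIdx_ne_vIdx : uIdx n ≠ vIdx n := by
  simp [uIdx, vIdx, Fin.ext_iff, Fin.last]

lemma xIdx_ne_uIdx (i : Fin (n + 1)) : xIdx n i ≠ uIdx n := by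
  intro h; have := congrArg Fin.val h; simp [uIdx, xIdx] at this

lemma xIdx_ne_vIdx (i : Fin (n + 1)) : xIdx n i ≠ vIdx n := by
  have := i.isLt; simp [vIdx, xIdx, Fin.ext_iff, Fin.last]; omega

lemma xIdx_injective : Function.Injective (xIdx n) := by
  intro a b h; simpa [xIdx, Fin.ext_iff] using h

lemma idx_cases (i : Fin (n + 3)) : i = uIdx n ∨ (∃ k, i = xIdx n k) ∨ i = vIdx n := by
  rcases i with ⟨m, hm⟩
  rcases Nat.eq_zero_or_pos m with h0 | h1
  · left; simp [uIdx, Fin.ext_iff, h0]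
  · by_cases h2 : m = n + 2
    · right; right; simp [vIdx, Fin.ext_iff, Fin.last, h2]
    · right; left; exact ⟨⟨m - 1, by omega⟩, by simp [xIdx, Fin.ext_iff]; omega⟩

lemma sum_split (f : Fin (n + 3) → ℝ) :
    ∑ i, f i = f (uIdx n) + (∑ k : Fin (n + 1), f (xIdx n k)) + f (vIdx n) := by
  rw [Fin.sum_univ_succ, Fin.sum_univ_castSucc]
  have h1 : ∀ k : Fin (n + 1), (Fin.succ (Fin.castSucc k)) = xIdx n k := by
    intro k; simp [xIdx, Fin.ext_iff]
  have h2 : Fin.succ (Fin.last (n + 1)) = vIdx n := by simp [vIdx, Fin.ext_iff, Fin.last]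
  rw [h2]
  simp only [h1]
  rw [uIdx]; ring

lemma update_eq_affine {m : ℕ} (p : Fin m → ℝ) (j : Fin m) :
    (fun t => Function.update p j t) = fun t => p + (t - p j) • (Pi.single j (1:ℝ) : Fin m → ℝ) := by
  funext t k
  by_cases h : k = j
  · subst h; simp
  · simp [Function.update_of_ne h, Pi.single_apply, h]

lemma contDiff_update_line {m : ℕ} (p : Fin m → ℝ) (j : Fin m) :
    ContDiff ℝ (⊤:ℕ∞) (fun t => Function.update p j t) := by
  rw [update_eq_affine]
  exact contDiff_const.add ((contDiff_id.sub contDiff_const).smul contDiff_const)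

lemma hasDerivAt_update_line {m : ℕ} (p : Fin m → ℝ) (j : Fin m) (t : ℝ) :
    HasDerivAt (fun t => Function.update p j t) (Pi.single j (1:ℝ)) t := by
  rw [update_eq_affine]
  have h : HasDerivAt (fun s : ℝ => (s - p j)) 1 t := (hasDerivAt_id t).sub_const _
  simpa using (h.smul_const (Pi.single j (1:ℝ))).const_add p

lemma contDiff_slice {m : ℕ} {f : (Fin m → ℝ) → ℝ} (hf : ContDiff ℝ (⊤:ℕ∞) f)
    (p : Fin m → ℝ) (j : Fin m) : ContDiff ℝ (⊤:ℕ∞) (fun t => f (Function.update p j t)) :=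
  hf.comp (contDiff_update_line p j)

lemma partialDeriv'_eq_fderiv {f : (Fin (n + 3) → ℝ) → ℝ} (hf : Differentiable ℝ f)
    (j : Fin (n + 3)) (p : Fin (n + 3) → ℝ) :
    partialDeriv' n f j p = fderiv ℝ f p (Pi.single j 1) := by
  have h2 := hasDerivAt_update_line p j (p j)
  have h3 : Function.update p j (p j) = p := Function.update_eq_self j p
  have h4 : HasFDerivAt f (fderiv ℝ f p) (Function.update p j (p j)) := by rw [h3]; exact (hf p).hasFDerivAt
  have h5 := h4.comp_hasDerivAt (p j) h2
  exact HasDerivAt.deriv (by simpa [Function.comp_def] using h5)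

lemma contDiff_partialDeriv' {f : (Fin (n + 3) → ℝ) → ℝ} (hf : ContDiff ℝ (⊤:ℕ∞) f)
    (j : Fin (n + 3)) : ContDiff ℝ (⊤:ℕ∞) (fun p => partialDeriv' n f j p) := by
  have h : (fun p => partialDeriv' n f j p) = fun p => fderiv ℝ f p (Pi.single j 1) := by
    funext p; exact partialDeriv'_eq_fderiv (hf.differentiable (by simp)) j p
  rw [h]
  exact (hf.fderiv_right (by exact_mod_cast le_top)).clm_apply contDiff_const

lemma differentiable_comp_affine {F : ℝ → ℝ} (hF : ContDiff ℝ (⊤:ℕ∞) F) (c b : ℝ) :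
    Differentiable ℝ fun t => F (t / c + b) :=
  (hF.differentiable (by simp)).comp ((differentiable_id.div_const c).add_const b)

lemma deriv_cFc {F : ℝ → ℝ} (hF : ContDiff ℝ (⊤:ℕ∞) F) (K L c b t : ℝ) :
    deriv (fun t => K * F (t / c + b) * L) t = K * (deriv F (t / c + b) * c⁻¹) * L := by
  have h1 : HasDerivAt (fun t : ℝ => t / c + b) c⁻¹ t := by
    simpa [div_eq_mul_inv] using ((hasDerivAt_id t).mul_const c⁻¹).add_const b
  have h2 : HasDerivAt F (deriv F (t / c + b)) (t / c + b) :=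
    ((hF.differentiable (by simp)) _).hasDerivAt
  have h3 : HasDerivAt (fun t => F (t / c + b)) (deriv F (t / c + b) * c⁻¹) t := h2.comp t h1
  exact ((h3.const_mul K).mul_const L).deriv

lemma update_v_u {p : Fin (n+3) → ℝ} {t : ℝ} :
    Function.update p (vIdx n) t (uIdx n) = p (uIdx n) :=
  Function.update_of_ne uIdx_ne_vIdx _ _

lemma update_v_x {p : Fin (n+3) → ℝ} {t : ℝ} {k : Fin (n+1)} :
    Function.update p (vIdx n) t (xIdx n k) = p (xIdx n k) :=
  Function.update_of_ne (xIdx_ne_vIdx k) _ _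

lemma deriv_cFc' {F : ℝ → ℝ} (hF : ContDiff ℝ (⊤:ℕ∞) F) (K L c b t : ℝ) :
    deriv (fun t => K * (F (t / c + b) * c⁻¹) * L) t
      = K * ((deriv F (t / c + b) * c⁻¹) * c⁻¹) * L := by
  have h1 : HasDerivAt (fun t : ℝ => t / c + b) c⁻¹ t := by
    simpa [div_eq_mul_inv] using ((hasDerivAt_id t).mul_const c⁻¹).add_const b
  have h2 : HasDerivAt F (deriv F (t / c + b)) (t / c + b) :=
    ((hF.differentiable (by simp)) _).hasDerivAt
  have h3 : HasDerivAt (fun t => F (t / c + b)) (deriv F (t / c + b) * c⁻¹) t := h2.comp t h1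
  exact (((h3.mul_const c⁻¹).const_mul K).mul_const L).deriv

lemma deriv_cFc'' {F : ℝ → ℝ} (hF : ContDiff ℝ (⊤:ℕ∞) F) (K L c b t : ℝ) :
    deriv (fun t => K * ((F (t / c + b) * c⁻¹) * c⁻¹) * L) t
      = K * (((deriv F (t / c + b) * c⁻¹) * c⁻¹) * c⁻¹) * L := by
  have h1 : HasDerivAt (fun t : ℝ => t / c + b) c⁻¹ t := by
    simpa [div_eq_mul_inv] using ((hasDerivAt_id t).mul_const c⁻¹).add_const b
  have h2 : HasDerivAt F (deriv F (t / c + b)) (t / c + b) :=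
    ((hF.differentiable (by simp)) _).hasDerivAt
  have h3 : HasDerivAt (fun t => F (t / c + b)) (deriv F (t / c + b) * c⁻¹) t := h2.comp t h1
  exact ((((h3.mul_const c⁻¹).mul_const c⁻¹).const_mul K).mul_const L).deriv

lemma posDef_conj {m : ℕ} {G J : Matrix (Fin m) (Fin m) ℝ} (hG : G.PosDef) (hJ : IsUnit J) :
    (Jᵀ * G * J).PosDef := by
  have hJ' : Jᴴ = Jᵀ := Matrix.conjTranspose_eq_transpose_of_trivial J
  rw [← hJ']
  exact hG.conjTranspose_mul_mul_same (Matrix.mulVec_injective_iff_isUnit.mpr hJ)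

lemma comp_update_u (p : Fin (n+3) → ℝ) (t : ℝ) :
    (fun k => Function.update p (uIdx n) t (xIdx n k)) = fun k => p (xIdx n k) :=
  funext fun k => Function.update_of_ne (xIdx_ne_uIdx k) _ _

lemma comp_update_v (p : Fin (n+3) → ℝ) (t : ℝ) :
    (fun k => Function.update p (vIdx n) t (xIdx n k)) = fun k => p (xIdx n k) :=
  funext fun k => Function.update_of_ne (xIdx_ne_vIdx k) _ _

lemma comp_update_x (p : Fin (n+3) → ℝ) (l : Fin (n+1)) (t : ℝ) :
    (fun k => Function.update p (xIdx n l) t (xIdx n k))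
      = Function.update (fun k => p (xIdx n k)) l t := by
  funext k
  by_cases h : k = l
  · subst h; simp
  · rw [Function.update_of_ne (fun hh => h (xIdx_injective hh)) _ _,
      Function.update_of_ne h]

end KundtAux
/-- A smooth metric of Kundt shape on `ℝ^(n+3)`. -/
structure IsKundtShape (n : ℕ)
    (g : (Fin (n + 3) → ℝ) → Matrix (Fin (n + 3)) (Fin (n + 3)) ℝ) : Prop where
  smooth : ∀ i j, ContDiff ℝ (⊤ : ℕ∞) fun p => g p i j
  symm : ∀ p, (g p).IsSymm
  vv : ∀ p, g p (vIdx n) (vIdx n) = 0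
  xv : ∀ p i, g p (xIdx n i) (vIdx n) = 0
  uv : ∀ p, g p (uIdx n) (vIdx n) = 1
  posDef : ∀ p, (Matrix.of fun i j : Fin (n + 1) => g p (xIdx n i) (xIdx n j)).PosDef
  vIndep : ∀ p i j, partialDeriv' n (fun q => g q (xIdx n i) (xIdx n j)) (vIdx n) p = 0

/-- A shape transformation `φ(u,x,v) = (C(u), A(u,x), v/C'(u) + B(u,x))`. -/
def IsShapeTransform (n : ℕ) (φ : (Fin (n + 3) → ℝ) → Fin (n + 3) → ℝ) : Prop :=
  ∃ (C : ℝ → ℝ) (A : ℝ → (Fin (n + 1) → ℝ) → Fin (n + 1) → ℝ) (B : ℝ → (Fin (n + 1) → ℝ) → ℝ),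
    ContDiff ℝ (⊤ : ℕ∞) C ∧
    (∀ i, ContDiff ℝ (⊤ : ℕ∞) fun q : ℝ × (Fin (n + 1) → ℝ) => A q.1 q.2 i) ∧
    ContDiff ℝ (⊤ : ℕ∞) (fun q : ℝ × (Fin (n + 1) → ℝ) => B q.1 q.2) ∧
    (∀ u, deriv C u ≠ 0) ∧
    (∀ u x, IsUnit (Matrix.of fun i j : Fin (n + 1) =>
        deriv (fun t => A u (Function.update x j t) i) (x j))) ∧
    (∀ p, φ p (uIdx n) = C (p (uIdx n))) ∧
    (∀ p i, φ p (xIdx n i) = A (p (uIdx n)) (fun j => p (xIdx n j)) i) ∧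
    (∀ p, φ p (vIdx n) =
      p (vIdx n) / deriv C (p (uIdx n)) + B (p (uIdx n)) (fun j => p (xIdx n j)))

/-- The Jacobian matrix `Dφ_p` of `φ` at `p`. -/
def jacobianMatrix (n : ℕ) (φ : (Fin (n + 3) → ℝ) → Fin (n + 3) → ℝ)
    (p : Fin (n + 3) → ℝ) : Matrix (Fin (n + 3)) (Fin (n + 3)) ℝ :=
  Matrix.of fun i j => partialDeriv' n (fun q => φ q i) j p

/-- The pullback metric `(φ*g)(p) = (Dφ_p)ᵀ · g(φ(p)) · Dφ_p`. -/
def pullbackMetric (n : ℕ) (φ : (Fin (n + 3) → ℝ) → Fin (n + 3) → ℝ)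
    (g : (Fin (n + 3) → ℝ) → Matrix (Fin (n + 3)) (Fin (n + 3)) ℝ)
    (p : Fin (n + 3) → ℝ) : Matrix (Fin (n + 3)) (Fin (n + 3)) ℝ :=
  (jacobianMatrix n φ p)ᵀ * g (φ p) * jacobianMatrix n φ p

/-- A smooth metric of degenerate Kundt shape: a metric of Kundt shape such that additionally
`∂²_v g_{u x^i} ≡ 0` for all `i` and `∂³_v g_{uu} ≡ 0`. -/
def IsDegenerateKundtShape (n : ℕ)
    (g : (Fin (n + 3) → ℝ) → Matrix (Fin (n + 3)) (Fin (n + 3)) ℝ) : Prop :=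
  IsKundtShape n g ∧
  (∀ p (i : Fin (n + 1)),
    deriv (deriv (fun t => g (Function.update p (vIdx n) t) (uIdx n) (xIdx n i)))
      (p (vIdx n)) = 0) ∧
  (∀ p,
    deriv (deriv (deriv (fun t => g (Function.update p (vIdx n) t) (uIdx n) (uIdx n))))
      (p (vIdx n)) = 0)


open KundtAux in
/-- **Theorem 2.** Shape transformations preserve the class of smooth metrics of degenerate
Kundt shape. -/
theorem shapeTransform_preserves_degenerateKundtShape (n : ℕ)
    (φ : (Fin (n + 3) → ℝ) → Fin (n + 3) → ℝ)
    (g : (Fin (n + 3) → ℝ) → Matrix (Fin (n + 3)) (Fin (n + 3)) ℝ)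
    (hφ : IsShapeTransform n φ) (hg : IsDegenerateKundtShape n g) :
    IsDegenerateKundtShape n (pullbackMetric n φ g) := by
  obtain ⟨C, A, B, hC, hA, hB, hC', hJu, hu, hx, hv⟩ := hφ
  obtain ⟨hK, hgux2, hguu3⟩ := hg
  -- basic smoothness facts
  have hCd : ContDiff ℝ (⊤:ℕ∞) (deriv C) := (contDiff_infty_iff_deriv.mp hC).2
  have hCinv : ContDiff ℝ (⊤:ℕ∞) (fun s => (deriv C s)⁻¹) := hCd.inv hC'
  have projU : ContDiff ℝ (⊤:ℕ∞) (fun p : Fin (n+3) → ℝ => p (uIdx n)) :=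
    (ContinuousLinearMap.proj (R := ℝ) (φ := fun _ : Fin (n+3) => ℝ) (uIdx n)).contDiff
  have projV : ContDiff ℝ (⊤:ℕ∞) (fun p : Fin (n+3) → ℝ => p (vIdx n)) :=
    (ContinuousLinearMap.proj (R := ℝ) (φ := fun _ : Fin (n+3) => ℝ) (vIdx n)).contDiff
  have projX : ContDiff ℝ (⊤:ℕ∞) (fun p : Fin (n+3) → ℝ => (fun j => p (xIdx n j))) :=
    contDiff_pi.mpr fun j =>
      (ContinuousLinearMap.proj (R := ℝ) (φ := fun _ : Fin (n+3) => ℝ) (xIdx n j)).contDiff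
  have hφs : ∀ i, ContDiff ℝ (⊤:ℕ∞) fun p => φ p i := by
    intro i
    rcases idx_cases i with h | ⟨k, h⟩ | h <;> subst h
    · have : (fun p => φ p (uIdx n)) = fun p => C (p (uIdx n)) := funext hu
      rw [this]; exact hC.comp projU
    · have : (fun p => φ p (xIdx n k)) = fun p => A (p (uIdx n)) (fun j => p (xIdx n j)) k := by
        funext p; exact hx p k
      rw [this]; exact (hA k).comp (projU.prodMk projX)
    · have : (fun p => φ p (vIdx n)) =
          fun p => p (vIdx n) / deriv C (p (uIdx n)) + B (p (uIdx n)) (fun j => p (xIdx n j)) := by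
        funext p; exact hv p
      rw [this]
      exact (projV.div (hCd.comp projU) fun p => hC' _).add (hB.comp (projU.prodMk projX))
  have hφsm : ContDiff ℝ (⊤:ℕ∞) φ := contDiff_pi.mpr hφs
  have hgφ : ∀ i j, ContDiff ℝ (⊤:ℕ∞) fun p => g (φ p) i j :=
    fun i j => (hK.smooth i j).comp hφsm
  have hDsm : ∀ i j, ContDiff ℝ (⊤:ℕ∞) fun p => jacobianMatrix n φ p i j :=
    fun i j => contDiff_partialDeriv' (hφs i) j
  have hBs : ∀ y, ContDiff ℝ (⊤:ℕ∞) (fun s => B s y) :=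
    fun y => hB.comp (contDiff_id.prodMk contDiff_const)
  -- Jacobian entries
  have hD_uu : ∀ p, jacobianMatrix n φ p (uIdx n) (uIdx n) = deriv C (p (uIdx n)) := by
    intro p
    show deriv (fun t => φ (Function.update p (uIdx n) t) (uIdx n)) (p (uIdx n)) = _
    have h : (fun t => φ (Function.update p (uIdx n) t) (uIdx n)) = C := by
      funext t; rw [hu, Function.update_self]
    rw [h]
  have hD_ux : ∀ p k, jacobianMatrix n φ p (uIdx n) (xIdx n k) = 0 := by
    intro p k
    show deriv (fun t => φ (Function.update p (xIdx n k) t) (uIdx n)) (p (xIdx n k)) = _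
    have h : (fun t => φ (Function.update p (xIdx n k) t) (uIdx n)) = fun _ => C (p (uIdx n)) := by
      funext t; rw [hu, Function.update_of_ne (xIdx_ne_uIdx k).symm]
    rw [h, deriv_const]
  have hD_uv : ∀ p, jacobianMatrix n φ p (uIdx n) (vIdx n) = 0 := by
    intro p
    show deriv (fun t => φ (Function.update p (vIdx n) t) (uIdx n)) (p (vIdx n)) = _
    have h : (fun t => φ (Function.update p (vIdx n) t) (uIdx n)) = fun _ => C (p (uIdx n)) := by
      funext t; rw [hu, Function.update_of_ne uIdx_ne_vIdx]
    rw [h, deriv_const]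
  have hD_xu : ∀ p k, jacobianMatrix n φ p (xIdx n k) (uIdx n)
      = deriv (fun s => A s (fun j => p (xIdx n j)) k) (p (uIdx n)) := by
    intro p k
    show deriv (fun t => φ (Function.update p (uIdx n) t) (xIdx n k)) (p (uIdx n)) = _
    have h : (fun t => φ (Function.update p (uIdx n) t) (xIdx n k))
        = fun t => A t (fun j => p (xIdx n j)) k := by
      funext t; rw [hx, Function.update_self, comp_update_u]
    rw [h]
  have hD_xx : ∀ p k l, jacobianMatrix n φ p (xIdx n k) (xIdx n l)
      = deriv (fun t => A (p (uIdx n)) (Function.update (fun j => p (xIdx n j)) l t) k)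
          (p (xIdx n l)) := by
    intro p k l
    show deriv (fun t => φ (Function.update p (xIdx n l) t) (xIdx n k)) (p (xIdx n l)) = _
    have h : (fun t => φ (Function.update p (xIdx n l) t) (xIdx n k))
        = fun t => A (p (uIdx n)) (Function.update (fun j => p (xIdx n j)) l t) k := by
      funext t; rw [hx, Function.update_of_ne (xIdx_ne_uIdx l).symm, comp_update_x]
    rw [h]
  have hD_xv : ∀ p k, jacobianMatrix n φ p (xIdx n k) (vIdx n) = 0 := by
    intro p k
    show deriv (fun t => φ (Function.update p (vIdx n) t) (xIdx n k)) (p (vIdx n)) = _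
    have h : (fun t => φ (Function.update p (vIdx n) t) (xIdx n k))
        = fun _ => A (p (uIdx n)) (fun j => p (xIdx n j)) k := by
      funext t; rw [hx, Function.update_of_ne uIdx_ne_vIdx, comp_update_v]
    rw [h, deriv_const]
  have hD_vu : ∀ p, jacobianMatrix n φ p (vIdx n) (uIdx n)
      = p (vIdx n) * deriv (fun s => (deriv C s)⁻¹) (p (uIdx n))
        + deriv (fun s => B s (fun j => p (xIdx n j))) (p (uIdx n)) := by
    intro p
    show deriv (fun t => φ (Function.update p (uIdx n) t) (vIdx n)) (p (uIdx n)) = _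
    have h : (fun t => φ (Function.update p (uIdx n) t) (vIdx n))
        = fun t => p (vIdx n) * (deriv C t)⁻¹ + B t (fun j => p (xIdx n j)) := by
      funext t
      rw [hv, Function.update_of_ne uIdx_ne_vIdx.symm, Function.update_self, comp_update_u,
        div_eq_mul_inv]
    rw [h, deriv_fun_add (((hCinv.differentiable (by simp)).const_mul _).differentiableAt)
      (((hBs _).differentiable (by simp)).differentiableAt), deriv_const_mul_field]
  have hD_vx : ∀ p l, jacobianMatrix n φ p (vIdx n) (xIdx n l)
      = deriv (fun t => B (p (uIdx n)) (Function.update (fun j => p (xIdx n j)) l t))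
          (p (xIdx n l)) := by
    intro p l
    show deriv (fun t => φ (Function.update p (xIdx n l) t) (vIdx n)) (p (xIdx n l)) = _
    have h : (fun t => φ (Function.update p (xIdx n l) t) (vIdx n))
        = fun t => p (vIdx n) / deriv C (p (uIdx n))
            + B (p (uIdx n)) (Function.update (fun j => p (xIdx n j)) l t) := by
      funext t
      rw [hv, Function.update_of_ne (xIdx_ne_vIdx l).symm, Function.update_of_ne (xIdx_ne_uIdx l).symm,
        comp_update_x]
    rw [h, deriv_const_add]
  have hD_vv : ∀ p, jacobianMatrix n φ p (vIdx n) (vIdx n) = (deriv C (p (uIdx n)))⁻¹ := by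
    intro p
    show deriv (fun t => φ (Function.update p (vIdx n) t) (vIdx n)) (p (vIdx n)) = _
    have h : (fun t => φ (Function.update p (vIdx n) t) (vIdx n))
        = fun t => t * (deriv C (p (uIdx n)))⁻¹
            + B (p (uIdx n)) (fun j => p (xIdx n j)) := by
      funext t
      rw [hv, Function.update_of_ne uIdx_ne_vIdx, Function.update_self, comp_update_v,
        div_eq_mul_inv]
    rw [h]
    simp [deriv_add_const, deriv_mul_const_field]
  -- symmetry consequences for g
  have hgvx : ∀ q i, g q (vIdx n) (xIdx n i) = 0 :=
    fun q i => ((hK.symm q).apply (xIdx n i) (vIdx n)).trans (hK.xv q i)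
  have hgvu : ∀ q, g q (vIdx n) (uIdx n) = 1 :=
    fun q => ((hK.symm q).apply (uIdx n) (vIdx n)).trans (hK.uv q)
  have hgxu : ∀ q i, g q (xIdx n i) (uIdx n) = g q (uIdx n) (xIdx n i) :=
    fun q i => (hK.symm q).apply (uIdx n) (xIdx n i)
  -- expansion of the pullback metric
  have hexp : ∀ p a b, pullbackMetric n φ g p a b
      = ∑ i, ∑ j, jacobianMatrix n φ p i a * g (φ p) i j * jacobianMatrix n φ p j b := by
    intro p a b
    rw [pullbackMetric, Matrix.mul_apply]
    simp only [Matrix.mul_apply, Matrix.transpose_apply, Finset.sum_mul]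
    rw [Finset.sum_comm]
  -- behaviour of φ along v-lines
  have hline : ∀ (p : Fin (n+3) → ℝ) t, φ (Function.update p (vIdx n) t)
      = Function.update (φ p) (vIdx n)
          (t / deriv C (p (uIdx n)) + B (p (uIdx n)) (fun j => p (xIdx n j))) := by
    intro p t
    funext k
    rcases idx_cases k with h | ⟨i, h⟩ | h <;> subst h
    · rw [Function.update_of_ne uIdx_ne_vIdx, hu, hu, Function.update_of_ne uIdx_ne_vIdx]
    · rw [Function.update_of_ne (xIdx_ne_vIdx i), hx, hx,
        Function.update_of_ne uIdx_ne_vIdx, comp_update_v]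
    · rw [Function.update_self, hv, Function.update_self,
        Function.update_of_ne uIdx_ne_vIdx, comp_update_v]
  -- slices of g along v-lines
  have hFsm : ∀ (P0 : Fin (n+3) → ℝ) (a b : Fin (n+3)),
      ContDiff ℝ (⊤:ℕ∞) (fun s => g (Function.update P0 (vIdx n) s) a b) :=
    fun P0 a b => contDiff_slice (hK.smooth a b) P0 (vIdx n)
  have hFxx' : ∀ (P0 : Fin (n+3) → ℝ) k l s,
      deriv (fun s' => g (Function.update P0 (vIdx n) s') (xIdx n k) (xIdx n l)) s = 0 := by
    intro P0 k l s
    have h := hK.vIndep (Function.update P0 (vIdx n) s) k l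
    unfold partialDeriv' at h
    simpa [Function.update_idem, Function.update_self] using h
  have hFux'' : ∀ (P0 : Fin (n+3) → ℝ) i s,
      deriv (deriv (fun s' => g (Function.update P0 (vIdx n) s') (uIdx n) (xIdx n i))) s = 0 := by
    intro P0 i s
    have h := hgux2 (Function.update P0 (vIdx n) s) i
    simpa [Function.update_idem, Function.update_self] using h
  have hFuu''' : ∀ (P0 : Fin (n+3) → ℝ) s,
      deriv (deriv (deriv (fun s' =>
        g (Function.update P0 (vIdx n) s') (uIdx n) (uIdx n)))) s = 0 := by
    intro P0 s
    have h := hguu3 (Function.update P0 (vIdx n) s)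
    simpa [Function.update_idem, Function.update_self] using h
  refine ⟨⟨?_, ?_, ?_, ?_, ?_, ?_, ?_⟩, ?_, ?_⟩
  · -- smooth
    intro a b
    have h : (fun p => pullbackMetric n φ g p a b)
        = fun p => ∑ i, ∑ j, jacobianMatrix n φ p i a * g (φ p) i j
            * jacobianMatrix n φ p j b := funext fun p => hexp p a b
    rw [h]
    exact ContDiff.sum fun i _ => ContDiff.sum fun j _ => ((hDsm i a).mul (hgφ i j)).mul (hDsm j b)
  · -- symm
    intro p
    unfold Matrix.IsSymm
    rw [pullbackMetric, Matrix.transpose_mul, Matrix.transpose_mul, Matrix.transpose_transpose,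
      (hK.symm (φ p) : _ᵀ = _), Matrix.mul_assoc]
  · -- vv
    intro p
    rw [hexp]
    simp only [sum_split]
    simp [hD_uv, hD_xv, hD_vv, hK.vv, hgvx, hgvu, hK.xv, hK.uv]
  · -- xv
    intro p i
    rw [hexp]
    simp only [sum_split]
    simp [hD_uv, hD_xv, hD_vv, hD_ux, hK.vv, hgvx, hgvu, hK.xv, hK.uv]
  · -- uv
    intro p
    rw [hexp]
    simp only [sum_split]
    simp [hD_uv, hD_xv, hD_vv, hD_uu, hK.vv, hgvx, hgvu, hK.xv, hK.uv]
    exact mul_inv_cancel₀ (hC' _)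
  · -- posDef
    intro p
    have he : (Matrix.of fun i j : Fin (n+1) => jacobianMatrix n φ p (xIdx n i) (xIdx n j))
        = (Matrix.of fun i j : Fin (n + 1) =>
            deriv (fun t => A (p (uIdx n))
              (Function.update (fun j => p (xIdx n j)) j t) i) (p (xIdx n j))) := by
      ext i j; exact hD_xx p i j
    have hJm : IsUnit (Matrix.of fun i j : Fin (n+1) =>
        jacobianMatrix n φ p (xIdx n i) (xIdx n j)) := by
      rw [he]; exact hJu (p (uIdx n)) (fun j => p (xIdx n j))
    have hmat : (Matrix.of fun i j : Fin (n+1) => pullbackMetric n φ g p (xIdx n i) (xIdx n j))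
        = (Matrix.of fun i j : Fin (n+1) => jacobianMatrix n φ p (xIdx n i) (xIdx n j))ᵀ
          * (Matrix.of fun i j : Fin (n+1) => g (φ p) (xIdx n i) (xIdx n j))
          * (Matrix.of fun i j : Fin (n+1) => jacobianMatrix n φ p (xIdx n i) (xIdx n j)) := by
      ext k l
      simp only [Matrix.mul_apply, Matrix.transpose_apply, Matrix.of_apply]
      rw [hexp]
      simp only [sum_split]
      simp [hD_ux, hD_xv, hK.xv, hK.vv, hgvx, hgvu, hK.uv, Finset.sum_mul, Finset.mul_sum]
      rw [Finset.sum_comm]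
    rw [hmat]
    exact posDef_conj (hK.posDef (φ p)) hJm
  · -- vIndep
    intro p i j
    unfold partialDeriv'
    set c := deriv C (p (uIdx n)) with hc
    set b := B (p (uIdx n)) (fun j => p (xIdx n j)) with hb
    have hfun : (fun t => pullbackMetric n φ g (Function.update p (vIdx n) t) (xIdx n i) (xIdx n j))
        = fun t => ∑ k, ∑ l, jacobianMatrix n φ p (xIdx n k) (xIdx n i)
            * g (Function.update (φ p) (vIdx n) (t / c + b)) (xIdx n k) (xIdx n l)
            * jacobianMatrix n φ p (xIdx n l) (xIdx n j) := by
      funext t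
      rw [hexp, hline]
      simp only [sum_split]
      simp [hD_ux, hD_xv, hD_xx, hD_vx, hK.xv, hK.vv, hgvx, hgvu, hK.uv,
        update_v_u, update_v_x, comp_update_v]
      rw [← hc, ← hb]
    rw [hfun]
    have hd1 : ∀ k l, Differentiable ℝ (fun t =>
        jacobianMatrix n φ p (xIdx n k) (xIdx n i)
          * g (Function.update (φ p) (vIdx n) (t / c + b)) (xIdx n k) (xIdx n l)
          * jacobianMatrix n φ p (xIdx n l) (xIdx n j)) := fun k l =>
      ((differentiable_comp_affine (hFsm (φ p) _ _) c b).const_mul _).mul_const _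
    rw [deriv_fun_sum (fun k _ => ((Differentiable.fun_sum fun l _ => hd1 k l)).differentiableAt)]
    refine Finset.sum_eq_zero fun k _ => ?_
    rw [deriv_fun_sum (fun l _ => (hd1 k l).differentiableAt)]
    refine Finset.sum_eq_zero fun l _ => ?_
    have h := deriv_cFc
      (F := fun s => g (Function.update (φ p) (vIdx n) s) (xIdx n k) (xIdx n l))
      (hFsm (φ p) _ _) (jacobianMatrix n φ p (xIdx n k) (xIdx n i))
      (jacobianMatrix n φ p (xIdx n l) (xIdx n j)) c b (p (vIdx n))
    rw [h, hFxx']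
    ring
  · -- deg ux
    intro p i
    set c := deriv C (p (uIdx n)) with hc
    set b := B (p (uIdx n)) (fun j => p (xIdx n j)) with hb
    have hfun2 : (fun t => pullbackMetric n φ g (Function.update p (vIdx n) t)
          (uIdx n) (xIdx n i))
        = fun t =>
          ((∑ l, c * g (Function.update (φ p) (vIdx n) (t / c + b)) (uIdx n) (xIdx n l)
              * jacobianMatrix n φ p (xIdx n l) (xIdx n i))
            + c * jacobianMatrix n φ p (vIdx n) (xIdx n i))
          + ∑ k, ∑ l, jacobianMatrix n φ p (xIdx n k) (uIdx n)
              * g (Function.update (φ p) (vIdx n) (t / c + b)) (xIdx n k) (xIdx n l)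
              * jacobianMatrix n φ p (xIdx n l) (xIdx n i) := by
      funext t
      rw [hexp, hline]
      simp only [sum_split]
      simp [hD_uu, hD_ux, hD_uv, hD_xu, hD_xx, hD_xv, hD_vu, hD_vx, hD_vv,
        hK.xv, hK.vv, hgvx, hgvu, hK.uv, update_v_u, update_v_x, comp_update_v,
        Finset.mul_sum, Finset.sum_mul, mul_add, add_mul]
      rw [← hc, ← hb]
    have hdt1 : ∀ l, Differentiable ℝ (fun t =>
        c * g (Function.update (φ p) (vIdx n) (t / c + b)) (uIdx n) (xIdx n l)
          * jacobianMatrix n φ p (xIdx n l) (xIdx n i)) := fun l =>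
      (((differentiable_comp_affine (hFsm (φ p) _ _) c b).const_mul _).mul_const _)
    have hdt2 : ∀ k l, Differentiable ℝ (fun t =>
        jacobianMatrix n φ p (xIdx n k) (uIdx n)
          * g (Function.update (φ p) (vIdx n) (t / c + b)) (xIdx n k) (xIdx n l)
          * jacobianMatrix n φ p (xIdx n l) (xIdx n i)) := fun k l =>
      (((differentiable_comp_affine (hFsm (φ p) _ _) c b).const_mul _).mul_const _)
    have hd' : deriv (fun t =>
          ((∑ l, c * g (Function.update (φ p) (vIdx n) (t / c + b)) (uIdx n) (xIdx n l)
              * jacobianMatrix n φ p (xIdx n l) (xIdx n i))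
            + c * jacobianMatrix n φ p (vIdx n) (xIdx n i))
          + ∑ k, ∑ l, jacobianMatrix n φ p (xIdx n k) (uIdx n)
              * g (Function.update (φ p) (vIdx n) (t / c + b)) (xIdx n k) (xIdx n l)
              * jacobianMatrix n φ p (xIdx n l) (xIdx n i))
        = fun t => ∑ l, c
            * (deriv (fun s => g (Function.update (φ p) (vIdx n) s) (uIdx n) (xIdx n l))
                (t / c + b) * c⁻¹)
            * jacobianMatrix n φ p (xIdx n l) (xIdx n i) := by
      funext t
      rw [deriv_fun_add (((Differentiable.fun_sum fun l _ => hdt1 l).add_const _).differentiableAt)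
        ((Differentiable.fun_sum fun k _ => Differentiable.fun_sum fun l _ => hdt2 k l).differentiableAt),
        deriv_add_const, deriv_fun_sum (fun l _ => (hdt1 l).differentiableAt),
        deriv_fun_sum (fun k _ => (Differentiable.fun_sum fun l _ => hdt2 k l).differentiableAt)]
      have e1 : ∀ l : Fin (n+1), deriv (fun t =>
          c * g (Function.update (φ p) (vIdx n) (t / c + b)) (uIdx n) (xIdx n l)
            * jacobianMatrix n φ p (xIdx n l) (xIdx n i)) t
          = c * (deriv (fun s => g (Function.update (φ p) (vIdx n) s) (uIdx n) (xIdx n l))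
              (t / c + b) * c⁻¹) * jacobianMatrix n φ p (xIdx n l) (xIdx n i) := fun l =>
        deriv_cFc (hFsm (φ p) _ _) _ _ c b t
      have e2 : ∑ k, deriv (fun t => ∑ l, jacobianMatrix n φ p (xIdx n k) (uIdx n)
          * g (Function.update (φ p) (vIdx n) (t / c + b)) (xIdx n k) (xIdx n l)
          * jacobianMatrix n φ p (xIdx n l) (xIdx n i)) t = 0 := by
        refine Finset.sum_eq_zero fun k _ => ?_
        rw [deriv_fun_sum (fun l _ => (hdt2 k l).differentiableAt)]
        refine Finset.sum_eq_zero fun l _ => ?_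
        rw [deriv_cFc (hFsm (φ p) _ _) _ _ c b t, hFxx']
        ring
      rw [Finset.sum_congr rfl fun l _ => e1 l, e2, add_zero]
    rw [hfun2, hd']
    have hGsm : ∀ l : Fin (n+1), ContDiff ℝ (⊤:ℕ∞)
        (deriv (fun s => g (Function.update (φ p) (vIdx n) s) (uIdx n) (xIdx n l))) :=
      fun l => (contDiff_infty_iff_deriv.mp (hFsm (φ p) _ _)).2
    rw [deriv_fun_sum (fun l _ => ((((differentiable_comp_affine (hGsm l) c b).mul_const
      c⁻¹).const_mul c).mul_const _).differentiableAt)]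
    refine Finset.sum_eq_zero fun l _ => ?_
    rw [deriv_cFc' (hGsm l) _ _ c b _, hFux'']
    ring
  · -- deg uu
    intro p
    set c := deriv C (p (uIdx n)) with hc
    set b := B (p (uIdx n)) (fun j => p (xIdx n j)) with hb
    set α := deriv (fun s => (deriv C s)⁻¹) (p (uIdx n)) with hal
    set β := deriv (fun s => B s (fun j => p (xIdx n j))) (p (uIdx n)) with hbe
    have hfun3 : (fun t => pullbackMetric n φ g (Function.update p (vIdx n) t)
          (uIdx n) (uIdx n))
        = fun t =>
          ((((c * g (Function.update (φ p) (vIdx n) (t / c + b)) (uIdx n) (uIdx n) * c)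
            + ∑ l, c * g (Function.update (φ p) (vIdx n) (t / c + b)) (uIdx n) (xIdx n l)
                * jacobianMatrix n φ p (xIdx n l) (uIdx n))
            + ∑ k, jacobianMatrix n φ p (xIdx n k) (uIdx n)
                * g (Function.update (φ p) (vIdx n) (t / c + b)) (uIdx n) (xIdx n k) * c)
            + ∑ k, ∑ l, jacobianMatrix n φ p (xIdx n k) (uIdx n)
                * g (Function.update (φ p) (vIdx n) (t / c + b)) (xIdx n k) (xIdx n l)
                * jacobianMatrix n φ p (xIdx n l) (uIdx n))
          + (c * (t * α + β) + (t * α + β) * c) := by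
      funext t
      rw [hexp, hline]
      simp only [sum_split]
      simp [hD_uu, hD_ux, hD_uv, hD_xu, hD_xx, hD_xv, hD_vu, hD_vx, hD_vv,
        hK.xv, hK.vv, hgvx, hgvu, hgxu, hK.uv, update_v_u, update_v_x, comp_update_v,
        Finset.mul_sum, Finset.sum_mul, mul_add, add_mul, Finset.sum_add_distrib]
      ring
    have hdt0 : Differentiable ℝ (fun t =>
        c * g (Function.update (φ p) (vIdx n) (t / c + b)) (uIdx n) (uIdx n) * c) :=
      ((differentiable_comp_affine (hFsm (φ p) _ _) c b).const_mul _).mul_const _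
    have hdt1 : ∀ l : Fin (n+1), Differentiable ℝ (fun t =>
        c * g (Function.update (φ p) (vIdx n) (t / c + b)) (uIdx n) (xIdx n l)
          * jacobianMatrix n φ p (xIdx n l) (uIdx n)) := fun l =>
      ((differentiable_comp_affine (hFsm (φ p) _ _) c b).const_mul _).mul_const _
    have hdt2 : ∀ k : Fin (n+1), Differentiable ℝ (fun t =>
        jacobianMatrix n φ p (xIdx n k) (uIdx n)
          * g (Function.update (φ p) (vIdx n) (t / c + b)) (uIdx n) (xIdx n k) * c) := fun k =>
      ((differentiable_comp_affine (hFsm (φ p) _ _) c b).const_mul _).mul_const _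
    have hdt3 : ∀ k l : Fin (n+1), Differentiable ℝ (fun t =>
        jacobianMatrix n φ p (xIdx n k) (uIdx n)
          * g (Function.update (φ p) (vIdx n) (t / c + b)) (xIdx n k) (xIdx n l)
          * jacobianMatrix n φ p (xIdx n l) (uIdx n)) := fun k l =>
      ((differentiable_comp_affine (hFsm (φ p) _ _) c b).const_mul _).mul_const _
    have hdtL : Differentiable ℝ (fun t : ℝ => c * (t * α + β) + (t * α + β) * c) :=
      (((differentiable_id.mul_const α).add_const β).const_mul c).add
        (((differentiable_id.mul_const α).add_const β).mul_const c)
    have hLder : ∀ t : ℝ, deriv (fun t : ℝ => c * (t * α + β) + (t * α + β) * c) t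
        = c * α + α * c := by
      intro t
      have h0 : HasDerivAt (fun t : ℝ => t * α + β) α t := by
        simpa using ((hasDerivAt_id t).mul_const α).add_const β
      exact ((h0.const_mul c).add (h0.mul_const c)).deriv
    -- first derivative
    have hd1 : deriv (fun t =>
          ((((c * g (Function.update (φ p) (vIdx n) (t / c + b)) (uIdx n) (uIdx n) * c)
            + ∑ l, c * g (Function.update (φ p) (vIdx n) (t / c + b)) (uIdx n) (xIdx n l)
                * jacobianMatrix n φ p (xIdx n l) (uIdx n))
            + ∑ k, jacobianMatrix n φ p (xIdx n k) (uIdx n)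
                * g (Function.update (φ p) (vIdx n) (t / c + b)) (uIdx n) (xIdx n k) * c)
            + ∑ k, ∑ l, jacobianMatrix n φ p (xIdx n k) (uIdx n)
                * g (Function.update (φ p) (vIdx n) (t / c + b)) (xIdx n k) (xIdx n l)
                * jacobianMatrix n φ p (xIdx n l) (uIdx n))
          + (c * (t * α + β) + (t * α + β) * c))
        = fun t =>
          (((c * (deriv (fun s => g (Function.update (φ p) (vIdx n) s) (uIdx n) (uIdx n))
                (t / c + b) * c⁻¹) * c)
            + ∑ l, c * (deriv (fun s => g (Function.update (φ p) (vIdx n) s) (uIdx n) (xIdx n l))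
                (t / c + b) * c⁻¹) * jacobianMatrix n φ p (xIdx n l) (uIdx n))
            + ∑ k, jacobianMatrix n φ p (xIdx n k) (uIdx n)
                * (deriv (fun s => g (Function.update (φ p) (vIdx n) s) (uIdx n) (xIdx n k))
                    (t / c + b) * c⁻¹) * c)
          + (c * α + α * c) := by
      funext t
      have dC : Differentiable ℝ _ :=
        hdt0.fun_add (Differentiable.fun_sum (u := Finset.univ) fun l _ => hdt1 l)
      have dB : Differentiable ℝ _ :=
        dC.fun_add (Differentiable.fun_sum (u := Finset.univ) fun k _ => hdt2 k)
      have dA : Differentiable ℝ _ :=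
        dB.fun_add (Differentiable.fun_sum (u := Finset.univ) fun k _ =>
          Differentiable.fun_sum (u := Finset.univ) fun l _ => hdt3 k l)
      rw [deriv_fun_add dA.differentiableAt hdtL.differentiableAt,
        deriv_fun_add dB.differentiableAt
          (Differentiable.fun_sum fun k _ => Differentiable.fun_sum fun l _ => hdt3 k l).differentiableAt,
        deriv_fun_add dC.differentiableAt (Differentiable.fun_sum fun k _ => hdt2 k).differentiableAt,
        deriv_fun_add hdt0.differentiableAt (Differentiable.fun_sum fun l _ => hdt1 l).differentiableAt,
        deriv_cFc (hFsm (φ p) (uIdx n) (uIdx n)) c c c b t,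
        deriv_fun_sum (fun l (_ : l ∈ Finset.univ) => (hdt1 l).differentiableAt),
        deriv_fun_sum (fun k (_ : k ∈ Finset.univ) => (hdt2 k).differentiableAt),
        deriv_fun_sum (fun k (_ : k ∈ Finset.univ) =>
          (Differentiable.fun_sum fun l _ => hdt3 k l).differentiableAt),
        Finset.sum_congr rfl (fun l (_ : l ∈ Finset.univ) =>
          deriv_cFc (hFsm (φ p) (uIdx n) (xIdx n l)) c
            (jacobianMatrix n φ p (xIdx n l) (uIdx n)) c b t),
        Finset.sum_congr rfl (fun k (_ : k ∈ Finset.univ) =>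
          deriv_cFc (hFsm (φ p) (uIdx n) (xIdx n k))
            (jacobianMatrix n φ p (xIdx n k) (uIdx n)) c c b t),
        hLder t]
      have e3 : ∑ k : Fin (n+1), deriv (fun t => ∑ l, jacobianMatrix n φ p (xIdx n k) (uIdx n)
          * g (Function.update (φ p) (vIdx n) (t / c + b)) (xIdx n k) (xIdx n l)
          * jacobianMatrix n φ p (xIdx n l) (uIdx n)) t = 0 := by
        refine Finset.sum_eq_zero fun k _ => ?_
        rw [deriv_fun_sum (fun l _ => (hdt3 k l).differentiableAt)]
        refine Finset.sum_eq_zero fun l _ => ?_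
        rw [deriv_cFc (hFsm (φ p) _ _) _ _ c b t, hFxx']
        ring
      rw [e3, add_zero]
    have hGuu : ContDiff ℝ (⊤:ℕ∞)
        (deriv (fun s => g (Function.update (φ p) (vIdx n) s) (uIdx n) (uIdx n))) :=
      (contDiff_infty_iff_deriv.mp (hFsm (φ p) _ _)).2
    have hG2uu : ContDiff ℝ (⊤:ℕ∞)
        (deriv (deriv (fun s => g (Function.update (φ p) (vIdx n) s) (uIdx n) (uIdx n)))) :=
      (contDiff_infty_iff_deriv.mp hGuu).2
    have hGux : ∀ l : Fin (n+1), ContDiff ℝ (⊤:ℕ∞)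
        (deriv (fun s => g (Function.update (φ p) (vIdx n) s) (uIdx n) (xIdx n l))) :=
      fun l => (contDiff_infty_iff_deriv.mp (hFsm (φ p) _ _)).2
    have hdt0' : Differentiable ℝ (fun t =>
        c * (deriv (fun s => g (Function.update (φ p) (vIdx n) s) (uIdx n) (uIdx n))
            (t / c + b) * c⁻¹) * c) :=
      (((differentiable_comp_affine hGuu c b).mul_const _).const_mul _).mul_const _
    have hdt1' : ∀ l : Fin (n+1), Differentiable ℝ (fun t =>
        c * (deriv (fun s => g (Function.update (φ p) (vIdx n) s) (uIdx n) (xIdx n l))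
            (t / c + b) * c⁻¹) * jacobianMatrix n φ p (xIdx n l) (uIdx n)) := fun l =>
      (((differentiable_comp_affine (hGux l) c b).mul_const _).const_mul _).mul_const _
    have hdt2' : ∀ k : Fin (n+1), Differentiable ℝ (fun t =>
        jacobianMatrix n φ p (xIdx n k) (uIdx n)
          * (deriv (fun s => g (Function.update (φ p) (vIdx n) s) (uIdx n) (xIdx n k))
              (t / c + b) * c⁻¹) * c) := fun k =>
      (((differentiable_comp_affine (hGux k) c b).mul_const _).const_mul _).mul_const _
    have hd2 : deriv (fun t =>
          (((c * (deriv (fun s => g (Function.update (φ p) (vIdx n) s) (uIdx n) (uIdx n))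
                (t / c + b) * c⁻¹) * c)
            + ∑ l, c * (deriv (fun s => g (Function.update (φ p) (vIdx n) s) (uIdx n) (xIdx n l))
                (t / c + b) * c⁻¹) * jacobianMatrix n φ p (xIdx n l) (uIdx n))
            + ∑ k, jacobianMatrix n φ p (xIdx n k) (uIdx n)
                * (deriv (fun s => g (Function.update (φ p) (vIdx n) s) (uIdx n) (xIdx n k))
                    (t / c + b) * c⁻¹) * c)
          + (c * α + α * c))
        = fun t => c * ((deriv (deriv (fun s =>
            g (Function.update (φ p) (vIdx n) s) (uIdx n) (uIdx n))) (t / c + b) * c⁻¹) * c⁻¹)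
            * c := by
      funext t
      rw [deriv_add_const, deriv_fun_add (hdt0'.fun_add (Differentiable.fun_sum fun l _ =>
          hdt1' l)).differentiableAt (Differentiable.fun_sum fun k _ => hdt2' k).differentiableAt,
        deriv_fun_add hdt0'.differentiableAt (Differentiable.fun_sum fun l _ => hdt1' l).differentiableAt,
        deriv_cFc' hGuu c c c b t,
        deriv_fun_sum (fun l (_ : l ∈ Finset.univ) => (hdt1' l).differentiableAt),
        deriv_fun_sum (fun k (_ : k ∈ Finset.univ) => (hdt2' k).differentiableAt)]
      have e1 : ∑ l : Fin (n+1), deriv (fun t =>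
          c * (deriv (fun s => g (Function.update (φ p) (vIdx n) s) (uIdx n) (xIdx n l))
              (t / c + b) * c⁻¹) * jacobianMatrix n φ p (xIdx n l) (uIdx n)) t = 0 := by
        refine Finset.sum_eq_zero fun l _ => ?_
        rw [deriv_cFc' (hGux l) _ _ c b t, hFux'']
        ring
      have e2 : ∑ k : Fin (n+1), deriv (fun t =>
          jacobianMatrix n φ p (xIdx n k) (uIdx n)
            * (deriv (fun s => g (Function.update (φ p) (vIdx n) s) (uIdx n) (xIdx n k))
                (t / c + b) * c⁻¹) * c) t = 0 := by
        refine Finset.sum_eq_zero fun k _ => ?_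
        rw [deriv_cFc' (hGux k) _ _ c b t, hFux'']
        ring
      rw [e1, e2, add_zero, add_zero]
    rw [hfun3, hd1, hd2, deriv_cFc'' hG2uu c c c b _, hFuu''']
    ring
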